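/- Let g = (a b; 0 d) be an integer matrix with ad = n > 0, a > 0, c = 0, and let z = x+iy with y > 0. If u(z, gz) < δ where u(z,w) = |z−w|²/(4 Im z Im w), then |a − d| ≤ 2√(nδ) and |(a−d)x + b| ≤ 2√(nδ)·y. -/

import Mathlib

open Complex

theorem upper_triangular_bounds (a b d n : ℤ) (x y δ : ℝ)
    (hdet : a * d = n) (hn : 0 < n) (ha : 0 < a) (hy : 0 < y) (hδ : 0 ≤ δ) :
    let z : ℂ := (x : ℂ) + (y : ℂ) * Complex.I
    let gz : ℂ := ((a : ℂ) * z + (b : ℂ)) / (d : ℂ)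
    let u : ℝ := ‖z - gz‖ ^ 2 / (4 * z.im * gz.im)
    u < δ →
      |(a : ℝ) - (d : ℝ)| ≤ 2 * Real.sqrt (n * δ) ∧
      |((a : ℝ) - (d : ℝ)) * x + (b : ℝ)| ≤ 2 * Real.sqrt (n * δ) * y := by
  intro z gz u hu
  have hd : (0:ℤ) < d := by nlinarith
  have hA : (0:ℝ) < (a:ℝ) := by exact_mod_cast ha
  have hD : (0:ℝ) < (d:ℝ) := by exact_mod_cast hd
  have hN : ((n:ℝ)) = (a:ℝ) * (d:ℝ) := by exact_mod_cast hdet.symm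
  have hzim : z.im = y := by simp [z]
  have hgzim : gz.im = (a:ℝ) * y / (d:ℝ) := by
    simp [gz, z, Complex.div_im, Complex.normSq_apply]
    field_simp
  have hre : (z - gz).re = x - ((a:ℝ) * x + b) / d := by
    simp [gz, z, Complex.div_re, Complex.normSq_apply]
    field_simp
  have him : (z - gz).im = y - (a:ℝ) * y / d := by
    simp [gz, z, Complex.div_im, Complex.normSq_apply]
    field_simp
  have habs : ‖z - gz‖ ^ 2 =
      (x - ((a:ℝ) * x + b) / d) ^ 2 + (y - (a:ℝ) * y / d) ^ 2 := by
    rw [Complex.sq_norm, Complex.normSq_apply, hre, him]; ring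
  have hupos : 0 < 4 * z.im * gz.im := by
    rw [hzim, hgzim]; positivity
  have hu' : ‖z - gz‖ ^ 2 < δ * (4 * z.im * gz.im) := by
    exact (div_lt_iff₀ hupos).mp hu
  rw [habs, hzim, hgzim] at hu'
  have key : (((a:ℝ) - d) * x + b) ^ 2 + ((a:ℝ) - d) ^ 2 * y ^ 2
      < 4 * (n:ℝ) * δ * y ^ 2 := by
    have hdne : ((d:ℝ)) ≠ 0 := hD.ne'
    rw [hN]
    field_simp at hu'
    nlinarith [hu', hD]
  have hsq : (2 * Real.sqrt ((n:ℝ) * δ)) ^ 2 = 4 * ((n:ℝ) * δ) := by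
    rw [mul_pow, Real.sq_sqrt (by positivity)]; ring
  have hsnn : 0 ≤ 2 * Real.sqrt ((n:ℝ) * δ) := by positivity
  constructor
  · apply abs_le_of_sq_le_sq _ hsnn
    rw [hsq]
    nlinarith [sq_nonneg (((a:ℝ) - d) * x + b)]
  · apply abs_le_of_sq_le_sq _ (by positivity)
    rw [mul_pow, hsq]
    nlinarith [sq_nonneg ((a:ℝ) - d), sq_nonneg (((a:ℝ)-d)*y)]
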